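/- Assume K = k_i + k_j = 2 and k_l = 0. Then the class modulo B of the cocycle (0, x⁻¹) forms a basis of the ℂ-vector space V/B; in particular dim_ℂ V/B = 1. -/

import Mathlib

noncomputable section

open LaurentPolynomial

/-- `L = ℂ[x, x⁻¹]`, the Laurent polynomials over `ℂ`. -/
abbrev L : Type := LaurentPolynomial ℂ

/-- The coefficient of `x^n` in a Laurent polynomial. -/
def coeffL (p : L) (n : ℤ) : ℂ := p.coeff n

lemma coeffL_zero (n : ℤ) : coeffL 0 n = 0 := rfl

lemma coeffL_add (a b : L) (n : ℤ) : coeffL (a + b) n = coeffL a n + coeffL b n := by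
  unfold coeffL; erw [Finsupp.add_apply]; rfl

lemma coeffL_smul (c : ℂ) (a : L) (n : ℤ) : coeffL (c • a) n = c * coeffL a n := by
  unfold coeffL; erw [Finsupp.smul_apply]; rfl

/-- `L₊`: Laurent polynomials involving only nonnegative powers of `x`. -/
def Lplus : Submodule ℂ L where
  carrier := {p | ∀ n : ℤ, n < 0 → coeffL p n = 0}
  zero_mem' := fun n _ => coeffL_zero n
  add_mem' := by intro a b ha hb n hn; rw [coeffL_add, ha n hn, hb n hn, add_zero]
  smul_mem' := by intro c p hp n hn; rw [coeffL_smul, hp n hn, mul_zero]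

/-- `L₋`: Laurent polynomials involving only nonpositive powers of `x`. -/
def Lminus : Submodule ℂ L where
  carrier := {p | ∀ n : ℤ, 0 < n → coeffL p n = 0}
  zero_mem' := fun n _ => coeffL_zero n
  add_mem' := by intro a b ha hb n hn; rw [coeffL_add, ha n hn, hb n hn, add_zero]
  smul_mem' := by intro c p hp n hn; rw [coeffL_smul, hp n hn, mul_zero]

/-- The derivative `d/dx` on Laurent polynomials. -/
def D (p : L) : L := Finsupp.sum p.coeff fun n a => ((n : ℂ) * a) • T (n - 1)

/-- `V = L × L`, the model of Čech 1-cochains with values in `T₂^{ij}`: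
a pair `(a, b)` encodes `a(x)ξᵢξⱼ∂/∂x + b(x)ξᵢξⱼξₗ∂/∂ξₗ` on `U₀ ∩ U₁`. -/
abbrev V : Type := L × L

/-- `B₀ = L₊ × L₊`: cochains holomorphic in `U₀`. -/
def B0 : Submodule ℂ V := Lplus.prod Lplus

/-- `B₁`: cochains holomorphic in `U₁`, i.e. pairs `(a, b)` with
`x^(K-2)·a ∈ L₋` and `x^K·(b - kl·x⁻¹·a) ∈ L₋`. -/
def B1 (K kl : ℤ) : Submodule ℂ V :=
  Lminus.comap ((LinearMap.mulLeft ℂ (T (K - 2))).comp (LinearMap.fst ℂ L L)) ⊓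
  Lminus.comap ((LinearMap.mulLeft ℂ (T K)).comp
    (LinearMap.snd ℂ L L - (kl : ℂ) • (LinearMap.mulLeft ℂ (T (-1))).comp (LinearMap.fst ℂ L L)))

/-- The coboundary subspace `B = B₀ + B₁`. -/
def B (K kl : ℤ) : Submodule ℂ V := B0 ⊔ B1 K kl

/-- Action of `e = ∂/∂x` on cocycles: `E(a, b) = (a′, b′)`. -/
def Eop : V → V := fun p => (D p.1, D p.2)

/-- Action of `f = ∂/∂y` on cocycles:
`F(a, b) = ((2−K)·x·a − x²·a′, kl·a − K·x·b − x²·b′)`. -/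
def Fop (K kl : ℤ) : V → V := fun p =>
  (((2 - K : ℤ) : ℂ) • (T 1 * p.1) - T 2 * D p.1,
   (kl : ℂ) • p.1 - (K : ℂ) • (T 1 * p.2) - T 2 * D p.2)

lemma coeffL_T_mul (m : ℤ) (f : L) (n : ℤ) : coeffL (T m * f) n = coeffL f (n - m) := by
  have h := AddMonoidAlgebra.coeff_single_mul_apply f (1:ℂ) m n
  rw [one_mul] at h
  show (T m * f : L).coeff n = f.coeff (n - m)
  rw [neg_add_eq_sub] at h
  exact h

lemma coeffL_T (m n : ℤ) : coeffL (T m) n = if m = n then 1 else 0 := by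
  show (Finsupp.single m (1:ℂ)) n = _
  rw [Finsupp.single_apply]

lemma coeffL_sub (a b : L) (n : ℤ) : coeffL (a - b) n = coeffL a n - coeffL b n := by
  have : a - b = a + (-1 : ℂ) • b := by rw [neg_one_smul]; ring
  rw [this, coeffL_add, coeffL_smul]; ring

def fpos (p : L) : L := AddMonoidAlgebra.ofCoeff (p.coeff.filter (fun n => 0 ≤ n))

lemma coeffL_fpos_pos (p : L) (n : ℤ) (h : 0 ≤ n) : coeffL (fpos p) n = coeffL p n := by
  show (p.coeff.filter (fun n => 0 ≤ n)) n = _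
  rw [Finsupp.filter_apply_pos _ _ h]; rfl

lemma coeffL_fpos_neg (p : L) (n : ℤ) (h : ¬ 0 ≤ n) : coeffL (fpos p) n = 0 := by
  show (p.coeff.filter (fun n => 0 ≤ n)) n = 0
  rw [Finsupp.filter_apply_neg _ _ h]

/-- The linear functional `(a,b) ↦ coeff of b at -1`. -/
def phiV : V →ₗ[ℂ] ℂ where
  toFun p := coeffL p.2 (-1)
  map_add' a b := coeffL_add a.2 b.2 (-1)
  map_smul' c a := coeffL_smul c a.2 (-1)

lemma B1_snd_map (a b : L) :
    ((LinearMap.snd ℂ L L - ((0:ℤ) : ℂ) • (LinearMap.mulLeft ℂ (T (-1))).comp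
      (LinearMap.fst ℂ L L)) (a, b)) = b := by
  simp

lemma B_eq_ker : B 2 0 = LinearMap.ker phiV := by
  apply le_antisymm
  · rw [B]
    apply sup_le
    · rintro ⟨a, b⟩ hab
      have hb : b ∈ Lplus := hab.2
      simpa [phiV, LinearMap.mem_ker] using hb (-1) (by norm_num)
    · rintro ⟨a, b⟩ hab
      have h2 := Submodule.mem_comap.mp hab.2
      rw [LinearMap.comp_apply, B1_snd_map, LinearMap.mulLeft_apply] at h2
      rw [LinearMap.mem_ker]
      show coeffL b (-1) = 0
      have h3 : coeffL (T 2 * b) 1 = 0 := h2 1 (by norm_num)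
      rwa [coeffL_T_mul] at h3
  · rintro ⟨a, b⟩ hab
    rw [LinearMap.mem_ker] at hab
    have hb1 : coeffL b (-1) = 0 := hab
    have hsplit : ((a, b) : V) = (fpos a, fpos b) + (a - fpos a, b - fpos b) := by
      simp
    rw [B, hsplit]
    apply Submodule.add_mem_sup
    · constructor
      · intro n hn; exact coeffL_fpos_neg a n (by omega)
      · intro n hn; exact coeffL_fpos_neg b n (by omega)
    · constructor
      · -- T (2-2) * (a - fpos a) ∈ Lminus
        show ∀ n : ℤ, 0 < n → coeffL (T (2-2) * (a - fpos a)) n = 0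
        intro n hn
        rw [coeffL_T_mul, coeffL_sub, coeffL_fpos_pos a _ (by omega), sub_self]
      · show ∀ n : ℤ, 0 < n →
          coeffL (T 2 * ((LinearMap.snd ℂ L L - ((0:ℤ) : ℂ) • (LinearMap.mulLeft ℂ (T (-1))).comp
            (LinearMap.fst ℂ L L)) (a - fpos a, b - fpos b))) n = 0
        intro n hn
        rw [B1_snd_map, coeffL_T_mul, coeffL_sub]
        rcases eq_or_lt_of_le (by omega : (-1 : ℤ) ≤ n - 2) with h | h
        · rw [← h, hb1, coeffL_fpos_neg b _ (by omega), sub_self]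
        · rw [coeffL_fpos_pos b _ (by omega), sub_self]

lemma phiV_surj : Function.Surjective phiV := by
  intro c
  refine ⟨c • ((0, T (-1)) : V), ?_⟩
  show coeffL (c • T (-1)) (-1) = c
  rw [coeffL_smul, coeffL_T]
  simp

/-- If `K = kᵢ + kⱼ = 2` and `kl = 0`, the class mod `B` of the cocycle
`(0, x⁻¹)` forms a basis of `V/B`; in particular `dim_ℂ V/B = 1`. -/
theorem stmt_2 (ki kj kl K : ℤ) (hK : K = ki + kj) (hK2 : K = 2) (hkl : kl = 0) :
    (∃ bas : Module.Basis (Fin 1) ℂ (V ⧸ B K kl),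
      bas 0 = Submodule.Quotient.mk ((0, T (-1)) : V)) ∧
    Module.finrank ℂ (V ⧸ B K kl) = 1 := by
  subst hK2 hkl
  let e : (V ⧸ B 2 0) ≃ₗ[ℂ] ℂ :=
    (Submodule.quotEquivOfEq _ _ B_eq_ker).trans (phiV.quotKerEquivOfSurjective phiV_surj)
  have he : e (Submodule.Quotient.mk ((0, T (-1)) : V)) = 1 := by
    show phiV.quotKerEquivOfSurjective phiV_surj
      (Submodule.Quotient.mk ((0, T (-1)) : V)) = 1
    have : phiV ((0, T (-1)) : V) = 1 := by
      show coeffL (T (-1)) (-1) = 1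
      rw [coeffL_T]; simp
    simp [LinearMap.quotKerEquivOfSurjective, ← this]
  constructor
  · refine ⟨(Module.Basis.singleton (Fin 1) ℂ).map e.symm, ?_⟩
    rw [Module.Basis.map_apply, Module.Basis.singleton_apply, LinearEquiv.symm_apply_eq, he]
  · rw [e.finrank_eq, Module.finrank_self]
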